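/- There exists a compatible left-symmetric conformal algebra structure on a Lie conformal algebra R if and only if there exists a representation ρ of R on some C[∂]-module V and a bijective O-operator T: V → R associated with ρ. (In particular, if T is a bijective O-operator, then a_λ b := T(ρ(a)_λ T^{-1}(b)) defines a compatible left-symmetric conformal algebra structure on R.) -/

import Mathlib

open Finsupp

noncomputable section

/-- Coefficient of `λ^k` of the substitution `μ ↦ -λ-∂` applied to the polynomial
`Σₙ μ^n • (f n)` with coefficients in `A` (with `∂` acting on the coefficients). -/
def csubst {A : Type} [AddCommGroup A] [Module ℂ A]
    (D : Module.End ℂ A) (f : ℕ →₀ A) (k : ℕ) : A :=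
  f.sum fun n c => ((-1 : ℂ) ^ n * (n.choose k : ℂ)) • (D ^ (n - k)) c

/-- Coefficient of `λ^n μ^m` of `(a_λ b)_{λ+μ} c`, for a λ-product `m₁` on `A`
and a λ-action `m₂` of `A` on `V`. -/
def comp2 {A V : Type} [AddCommGroup A] [Module ℂ A] [AddCommGroup V] [Module ℂ V]
    (m₁ : A →ₗ[ℂ] A →ₗ[ℂ] (ℕ →₀ A)) (m₂ : A →ₗ[ℂ] V →ₗ[ℂ] (ℕ →₀ V))
    (a b : A) (c : V) (n m : ℕ) : V :=
  ∑ i ∈ Finset.range (n + 1),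
    (((m + n - i).choose (n - i) : ℕ) : ℂ) • m₂ (m₁ a b i) c (m + n - i)

/-- A conformal algebra: a `ℂ[∂]`-module with a sesquilinear λ-product,
encoded coefficientwise: `mul a b n` is the coefficient of `λ^n` in `a_λ b`. -/
structure ConfAlg (A : Type) [AddCommGroup A] [Module ℂ A] where
  D : Module.End ℂ A
  mul : A →ₗ[ℂ] A →ₗ[ℂ] (ℕ →₀ A)
  sesq_left_zero : ∀ a b, mul (D a) b 0 = 0
  sesq_left : ∀ a b n, mul (D a) b (n + 1) = - mul a b n
  sesq_right_zero : ∀ a b, mul a (D b) 0 = D (mul a b 0)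
  sesq_right : ∀ a b n, mul a (D b) (n + 1) = D (mul a b (n + 1)) + mul a b n

/-- A Lie conformal algebra: skew-symmetry `[a_λ b] = -[b_{-λ-∂} a]` and the
Jacobi identity `[a_λ[b_μ c]] = [[a_λ b]_{λ+μ} c] + [b_μ[a_λ c]]`, coefficientwise. -/
structure LieConfAlg (A : Type) [AddCommGroup A] [Module ℂ A] extends ConfAlg A where
  skew : ∀ a b k, mul a b k = - csubst D (mul b a) k
  jacobi : ∀ a b c n m,
    mul a (mul b c m) n = comp2 mul mul a b c n m + mul b (mul a c n) m

/-- A left-symmetric conformal algebra: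
`(a_λ b)_{λ+μ} c - a_λ(b_μ c) = (b_μ a)_{λ+μ} c - b_μ(a_λ c)`, coefficientwise. -/
structure LSConfAlg (A : Type) [AddCommGroup A] [Module ℂ A] extends ConfAlg A where
  lsym : ∀ a b c n m,
    comp2 mul mul a b c n m - mul a (mul b c m) n
      = comp2 mul mul b a c m n - mul b (mul a c n) m

/-- A representation of a Lie conformal algebra `L` on a `ℂ[∂]`-module `V`. -/
structure ConfRep {A : Type} [AddCommGroup A] [Module ℂ A]
    (L : LieConfAlg A) (V : Type) [AddCommGroup V] [Module ℂ V] where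
  DV : Module.End ℂ V
  act : A →ₗ[ℂ] V →ₗ[ℂ] (ℕ →₀ V)
  sesq_left_zero : ∀ a v, act (L.D a) v 0 = 0
  sesq_left : ∀ a v n, act (L.D a) v (n + 1) = - act a v n
  sesq_right_zero : ∀ a v, act a (DV v) 0 = DV (act a v 0)
  sesq_right : ∀ a v n, act a (DV v) (n + 1) = DV (act a v (n + 1)) + act a v n
  rep : ∀ a b v n m,
    comp2 L.mul act a b v n m = act a (act b v m) n - act b (act a v n) m

/-- `T : V → R` is an `𝒪`-operator associated with the representation `ρ`:
it is a `ℂ[∂]`-module map and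
`[T(u)_λ T(v)] = T(ρ(T u)_λ v - ρ(T v)_{-λ-∂} u)`, coefficientwise. -/
def IsOOperator {A V : Type} [AddCommGroup A] [Module ℂ A] [AddCommGroup V] [Module ℂ V]
    {L : LieConfAlg A} (ρ : ConfRep L V) (T : V →ₗ[ℂ] A) : Prop :=
  (∀ v, T (ρ.DV v) = L.D (T v)) ∧
  ∀ u v k, L.mul (T u) (T v) k = T (ρ.act (T u) v k - csubst ρ.DV (ρ.act (T v) u) k)

/-- Data of a representation of `L` together with a linear map into `L`'s carrier. -/
structure OOpData {A : Type} [AddCommGroup A] [Module ℂ A] (L : LieConfAlg A) where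
  V : Type
  [iV : AddCommGroup V]
  [mV : Module ℂ V]
  ρ : ConfRep L V
  T : V →ₗ[ℂ] A

attribute [instance] OOpData.iV OOpData.mV

lemma gsum_eq'' (j : ℕ) : ∀ n N : ℕ, j ≤ N →
    (∑ i ∈ Finset.range (n+1), (-1:ℤ)^i * (j.choose i) * ((N-i).choose (n-i)))
      = ((N-j).choose n : ℤ) := by
  induction j with
  | zero =>
    intro n N _
    rw [Finset.sum_eq_single 0]
    · simp
    · intro i _ hi
      rw [Nat.choose_eq_zero_of_lt (by omega : 0 < i)]; simp
    · simp
  | succ j ih =>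
    intro n N hN
    cases n with
    | zero => simp
    | succ n' =>
      have e1 := ih n' (N-1) (by omega)
      have e2 := ih (n'+1) N (by omega)
      rw [Finset.sum_range_succ'] at e2 ⊢
      have h1 : ∀ i ∈ Finset.range (n'+1),
          ((-1:ℤ)^(i+1) * ((j+1).choose (i+1)) * ((N-(i+1)).choose ((n'+1)-(i+1))))
          = -((-1:ℤ)^i * (j.choose i) * (((N-1)-i).choose (n'-i)))
            - ((-1:ℤ)^i * (j.choose (i+1)) * (((N-1)-i).choose (n'-i))) := by
        intro i _
        have hi1 : N - (i+1) = (N-1) - i := by omega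
        have hi2 : (n'+1) - (i+1) = n' - i := by omega
        rw [hi1, hi2, Nat.choose_succ_succ]
        push_cast
        ring
      have h2 : ∀ i ∈ Finset.range (n'+1),
          ((-1:ℤ)^(i+1) * (j.choose (i+1)) * ((N-(i+1)).choose ((n'+1)-(i+1))))
          = -((-1:ℤ)^i * (j.choose (i+1)) * (((N-1)-i).choose (n'-i))) := by
        intro i _
        have hi1 : N - (i+1) = (N-1) - i := by omega
        have hi2 : (n'+1) - (i+1) = n' - i := by omega
        rw [hi1, hi2]
        push_cast
        ring
      rw [Finset.sum_congr rfl h1, Finset.sum_congr rfl h2] at *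
      rw [Finset.sum_sub_distrib] at *
      rw [Finset.sum_neg_distrib] at *
      have pas : ((N-j).choose (n'+1) : ℤ) = ((N-(j+1)).choose n') + ((N-(j+1)).choose (n'+1)) := by
        have : N - j = (N - (j+1)) + 1 := by omega
        rw [this, Nat.choose_succ_succ']
        push_cast; ring
      have hd : N - 1 - j = N - (j+1) := by omega
      rw [hd] at e1
      simp only [pow_zero, one_mul, Nat.choose_zero_right, Nat.cast_one, Nat.sub_zero] at *
      linarith

lemma gsum_eq' (j n N : ℕ) (h : j ≤ N) :
    (∑ i ∈ Finset.range (n+1), (-1:ℤ)^i * (j.choose i) * ((N-i).choose (n-i)))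
      = ((N-j).choose n : ℤ) := gsum_eq'' j n N h

section Key
variable {A V : Type} [AddCommGroup A] [Module ℂ A] [AddCommGroup V] [Module ℂ V]
  (D : Module.End ℂ A) (m₂ : A →ₗ[ℂ] V →ₗ[ℂ] (ℕ →₀ V))
  (h0 : ∀ a v, m₂ (D a) v 0 = 0) (h1 : ∀ a v n, m₂ (D a) v (n + 1) = - m₂ a v n)

include h0 h1 in
lemma pow_act : ∀ (p : ℕ) (a : A) (v : V) (k : ℕ),
    m₂ ((D^p) a) v k = if p ≤ k then ((-1:ℂ)^p) • m₂ a v (k-p) else 0 := by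
  intro p
  induction p with
  | zero => intro a v k; simp
  | succ p ih =>
    intro a v k
    have : (D^(p+1)) a = D ((D^p) a) := by
      rw [pow_succ']; rfl
    rw [this]
    cases k with
    | zero => simp [h0]
    | succ k =>
      rw [h1, ih]
      by_cases h : p ≤ k
      · rw [if_pos h, if_pos (by omega : p+1 ≤ k+1)]
        have : k + 1 - (p+1) = k - p := by omega
        rw [this, pow_succ, mul_smul, neg_one_smul, smul_neg]
      · simp [h, (by omega : ¬ p+1 ≤ k+1)]

include h0 h1 in
lemma key_subst (f : ℕ →₀ A) (c : V) (n m : ℕ) :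
    ∑ i ∈ Finset.range (n+1), (((m+n-i).choose (n-i) : ℕ) : ℂ) • m₂ (csubst D f i) c (m+n-i)
      = ∑ i ∈ Finset.range (m+1), (((m+n-i).choose (m-i) : ℕ) : ℂ) • m₂ (f i) c (m+n-i) := by
  induction f using Finsupp.induction_linear with
  | zero =>
    simp [csubst]
  | add f g hf hg =>
    have hc : ∀ i, csubst D (f + g) i = csubst D f i + csubst D g i := by
      intro i
      unfold csubst
      rw [Finsupp.sum_add_index]
      · intro a _; simp
      · intro a _ c1 c2; simp [smul_add]
    simp only [hc, map_add, LinearMap.add_apply, Finsupp.add_apply, Finsupp.coe_add, Pi.add_apply,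
      smul_add, Finset.sum_add_distrib, hf, hg]
  | single j x =>
    have hcs : ∀ i, csubst D (Finsupp.single j x) i
        = ((-1:ℂ)^j * (j.choose i : ℂ)) • (D^(j-i)) x := by
      intro i
      unfold csubst
      rw [Finsupp.sum_single_index]
      simp
    by_cases hj : j ≤ m + n
    · have hL : ∀ i ∈ Finset.range (n+1),
          (((m+n-i).choose (n-i) : ℕ) : ℂ) • m₂ (csubst D (Finsupp.single j x) i) c (m+n-i)
          = ((-1:ℂ)^i * (j.choose i : ℂ) * (((m+n-i).choose (n-i) : ℕ) : ℂ)) • m₂ x c (m+n-j) := by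
        intro i hi
        simp only [Finset.mem_range] at hi
        rw [hcs, map_smul, LinearMap.smul_apply, Finsupp.smul_apply, pow_act D m₂ h0 h1]
        by_cases hij : i ≤ j
        · rw [if_pos (by omega)]
          have : m + n - i - (j - i) = m + n - j := by omega
          rw [this]
          simp only [smul_smul]
          congr 1
          have hp : j + (j - i) = i + 2*(j-i) := by omega
          have : (-1:ℂ)^j * (-1:ℂ)^(j-i) = (-1:ℂ)^i := by
            rw [← pow_add, hp, pow_add, pow_mul]; norm_num
          calc (((m+n-i).choose (n-i) : ℕ) : ℂ) * ((-1:ℂ)^j * (j.choose i : ℂ) * (-1:ℂ)^(j-i))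
              = ((-1:ℂ)^j * (-1:ℂ)^(j-i)) * ((j.choose i : ℂ) * (((m+n-i).choose (n-i) : ℕ) : ℂ)) := by ring
            _ = (-1:ℂ)^i * ((j.choose i : ℂ) * (((m+n-i).choose (n-i) : ℕ) : ℂ)) := by rw [this]
            _ = _ := by ring
        · rw [Nat.choose_eq_zero_of_lt (show j < i by omega)]
          simp
      rw [Finset.sum_congr rfl hL, ← Finset.sum_smul]
      have hgs := gsum_eq' j n (m+n) hj
      have hcast : (∑ i ∈ Finset.range (n+1),
          ((-1:ℂ)^i * (j.choose i : ℂ) * (((m+n-i).choose (n-i) : ℕ) : ℂ)))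
          = (((m+n-j).choose n : ℕ) : ℂ) := by
        have := congrArg (fun z : ℤ => (z : ℂ)) hgs
        push_cast at this
        convert this using 2 <;> push_cast <;> ring
      rw [hcast]
      -- RHS
      by_cases hjm : j ≤ m
      · rw [Finset.sum_eq_single j]
        · rw [Finsupp.single_eq_same]
          congr 2
          have h' : n ≤ m + n - j := by omega
          have h'' : (m+n-j) - n = m - j := by omega
          rw [← Nat.choose_symm h', h'']
        · intro i _ hij
          rw [Finsupp.single_eq_of_ne (by omega)]
          simp
        · intro hmem
          simp only [Finset.mem_range] at hmem
          omega
      · have : ((m+n-j).choose n) = 0 := Nat.choose_eq_zero_of_lt (by omega)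
        rw [this]
        rw [Finset.sum_eq_zero]
        · simp
        · intro i hi
          simp only [Finset.mem_range] at hi
          rw [Finsupp.single_eq_of_ne (by omega)]
          simp
    · rw [Finset.sum_eq_zero, Finset.sum_eq_zero]
      · intro i hi
        simp only [Finset.mem_range] at hi
        rw [Finsupp.single_eq_of_ne (by omega)]
        simp
      · intro i hi
        simp only [Finset.mem_range] at hi
        rw [hcs, map_smul, LinearMap.smul_apply, Finsupp.smul_apply, pow_act D m₂ h0 h1,
          if_neg (by omega)]
        simp

end Key

section Main
variable {A : Type} [AddCommGroup A] [Module ℂ A]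

lemma forward_dir (L : LieConfAlg A) (S : LSConfAlg A) (hD : S.D = L.D)
    (hcomp : ∀ a b k, L.mul a b k = S.mul a b k - csubst S.D (S.mul b a) k) :
    ∃ d : OOpData L, IsOOperator d.ρ d.T ∧ Function.Bijective d.T := by
  have h0 := S.sesq_left_zero
  have h1 := S.sesq_left
  have hrep : ∀ a b v n m, comp2 L.mul S.mul a b v n m
      = S.mul a (S.mul b v m) n - S.mul b (S.mul a v n) m := by
    intro a b v n m
    have hsplit : comp2 L.mul S.mul a b v n m
        = comp2 S.mul S.mul a b v n m
          - ∑ i ∈ Finset.range (n+1),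
              (((m+n-i).choose (n-i) : ℕ) : ℂ) • S.mul (csubst S.D (S.mul b a) i) v (m+n-i) := by
      unfold comp2
      rw [← Finset.sum_sub_distrib]
      refine Finset.sum_congr rfl fun i _ => ?_
      rw [hcomp a b i, map_sub, LinearMap.sub_apply, Finsupp.sub_apply, smul_sub]
    have hkey := key_subst S.D S.mul h0 h1 (S.mul b a) v n m
    have hba : ∑ i ∈ Finset.range (m+1),
        (((m+n-i).choose (m-i) : ℕ) : ℂ) • S.mul (S.mul b a i) v (m+n-i)
        = comp2 S.mul S.mul b a v m n := by
      unfold comp2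
      simp only [add_comm n m]
    rw [hsplit, hkey, hba]
    have hls := S.lsym a b v n m
    rw [sub_eq_sub_iff_sub_eq_sub] at hls
    rw [hls]
  refine ⟨⟨A, ⟨L.D, S.mul, ?_, ?_, ?_, ?_, hrep⟩, LinearMap.id⟩, ⟨?_, ?_⟩, Function.bijective_id⟩
  · rw [← hD]; exact h0
  · rw [← hD]; exact h1
  · rw [← hD]; exact S.sesq_right_zero
  · rw [← hD]; exact S.sesq_right
  · intro v; rfl
  · intro u v k
    simp only [LinearMap.id_coe, id_eq]
    rw [hcomp]
    exact congrArg (fun D => S.mul u v k - csubst D (S.mul v u) k) hD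
end Main

section Back
variable {A : Type} [AddCommGroup A] [Module ℂ A] {L : LieConfAlg A}

/-- The product `a *_λ b = T(ρ(a)_λ T⁻¹ b)` induced by a bijective map `T`. -/
def Mmul (d : OOpData L) (hbij : Function.Bijective d.T) :
    A →ₗ[ℂ] A →ₗ[ℂ] (ℕ →₀ A) where
  toFun a := (Finsupp.mapRange.linearMap d.T).comp
    ((d.ρ.act a).comp (LinearEquiv.ofBijective d.T hbij).symm.toLinearMap)
  map_add' a b := by
    ext x k
    simp [map_add]
  map_smul' r a := by
    ext x k
    simp

lemma Mmul_apply (d : OOpData L) (hbij : Function.Bijective d.T) (a b : A) (k : ℕ) :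
    Mmul d hbij a b k
      = d.T (d.ρ.act a ((LinearEquiv.ofBijective d.T hbij).symm b) k) := by
  simp [Mmul]

lemma Mmul_eq (d : OOpData L) (hbij : Function.Bijective d.T) (a b : A) :
    Mmul d hbij a b
      = Finsupp.mapRange d.T (map_zero d.T)
          (d.ρ.act a ((LinearEquiv.ofBijective d.T hbij).symm b)) := by
  ext k
  rw [Mmul_apply, Finsupp.mapRange_apply]

set_option maxHeartbeats 2000000 in
lemma backward_dir (L : LieConfAlg A) (d : OOpData L) (hO : IsOOperator d.ρ d.T)
    (hbij : Function.Bijective d.T) :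
    ∃ S : LSConfAlg A, S.D = L.D ∧
      ∀ a b k, L.mul a b k = S.mul a b k - csubst S.D (S.mul b a) k := by
  set e := LinearEquiv.ofBijective d.T hbij with he
  set M := Mmul d hbij with hMdef
  have hTe : ∀ x, d.T (e.symm x) = x := fun x => e.apply_symm_apply x
  have heT : ∀ x, e.symm (d.T x) = x := fun x => e.symm_apply_apply x
  have hM : ∀ a b k, M a b k = d.T (d.ρ.act a (e.symm b) k) := fun a b k => Mmul_apply d hbij a b k
  have hsymD : ∀ b, e.symm (L.D b) = d.ρ.DV (e.symm b) := by
    intro b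
    apply hbij.injective
    rw [hTe, hO.1, hTe]
  have hpow : ∀ (p : ℕ) (x : d.V), d.T ((d.ρ.DV ^ p) x) = (L.D ^ p) (d.T x) := by
    intro p
    induction p with
    | zero => intro x; rfl
    | succ p ih =>
      intro x
      have h₁ : (d.ρ.DV ^ (p+1)) x = d.ρ.DV ((d.ρ.DV ^ p) x) := by rw [pow_succ']; rfl
      have h₂ : (L.D ^ (p+1)) (d.T x) = L.D ((L.D ^ p) (d.T x)) := by rw [pow_succ']; rfl
      rw [h₁, h₂, hO.1, ih]
  have hcsub : ∀ (f : ℕ →₀ d.V) (k : ℕ),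
      d.T (csubst d.ρ.DV f k) = csubst L.D (Finsupp.mapRange d.T (map_zero d.T) f) k := by
    intro f k
    unfold csubst
    rw [Finsupp.sum_mapRange_index (fun n => by simp), map_finsuppSum]
    refine Finsupp.sum_congr fun n _ => ?_
    rw [map_smul, hpow]
  have hLmul : ∀ a b k, L.mul a b k
      = M a b k - d.T (csubst d.ρ.DV (d.ρ.act b (e.symm a)) k) := by
    intro a b k
    have h := hO.2 (e.symm a) (e.symm b) k
    rw [hTe, hTe] at h
    rw [h, map_sub, hM]
  -- the auxiliary action of V on V through T
  set m₂ : d.V →ₗ[ℂ] d.V →ₗ[ℂ] (ℕ →₀ d.V) := (d.ρ.act).comp d.T with hm₂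
  have hm0 : ∀ x v, m₂ (d.ρ.DV x) v 0 = 0 := by
    intro x v
    simp only [hm₂, LinearMap.comp_apply, hO.1]
    exact d.ρ.sesq_left_zero _ _
  have hm1 : ∀ x v k, m₂ (d.ρ.DV x) v (k+1) = - m₂ x v k := by
    intro x v k
    simp only [hm₂, LinearMap.comp_apply, hO.1]
    exact d.ρ.sesq_left _ _ _
  have hEE : ∀ (a b : A) (w : d.V) (n m : ℕ),
      ∑ i ∈ Finset.range (n+1),
          (((m+n-i).choose (n-i) : ℕ) : ℂ) • d.ρ.act (M a b i) w (m+n-i)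
        = comp2 L.mul d.ρ.act a b w n m
          + ∑ i ∈ Finset.range (m+1),
              (((m+n-i).choose (m-i) : ℕ) : ℂ) • d.ρ.act (M b a i) w (m+n-i) := by
    intro a b w n m
    have hsplit : ∀ i, M a b i
        = L.mul a b i + d.T (csubst d.ρ.DV (d.ρ.act b (e.symm a)) i) := by
      intro i
      rw [hLmul]
      abel
    have step1 : ∑ i ∈ Finset.range (n+1),
        (((m+n-i).choose (n-i) : ℕ) : ℂ) • d.ρ.act (M a b i) w (m+n-i)
        = comp2 L.mul d.ρ.act a b w n m
          + ∑ i ∈ Finset.range (n+1),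
              (((m+n-i).choose (n-i) : ℕ) : ℂ) •
                m₂ (csubst d.ρ.DV (d.ρ.act b (e.symm a)) i) w (m+n-i) := by
      unfold comp2
      rw [← Finset.sum_add_distrib]
      refine Finset.sum_congr rfl fun i _ => ?_
      rw [hsplit i, map_add, LinearMap.add_apply, Finsupp.add_apply, smul_add]
      simp only [hm₂, LinearMap.comp_apply]
    rw [step1, key_subst d.ρ.DV m₂ hm0 hm1]
    congr 1
  have hcompM : ∀ (a b c : A) (n m : ℕ),
      comp2 M M a b c n m
        = d.T (∑ i ∈ Finset.range (n+1),
            (((m+n-i).choose (n-i) : ℕ) : ℂ) • d.ρ.act (M a b i) (e.symm c) (m+n-i)) := by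
    intro a b c n m
    unfold comp2
    rw [map_sum]
    refine Finset.sum_congr rfl fun i _ => ?_
    rw [map_smul, hM]
  have hMM : ∀ (a b c : A) (n m : ℕ),
      M a (M b c m) n = d.T (d.ρ.act a (d.ρ.act b (e.symm c) m) n) := by
    intro a b c n m
    rw [hM, hM, heT]
  refine ⟨⟨⟨L.D, M, ?_, ?_, ?_, ?_⟩, ?_⟩, rfl, ?_⟩
  · intro a b
    rw [hM, d.ρ.sesq_left_zero, map_zero]
  · intro a b k
    rw [hM, hM, d.ρ.sesq_left, map_neg]
  · intro a b
    rw [hM, hM, hsymD, d.ρ.sesq_right_zero, hO.1]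
  · intro a b k
    rw [hM, hM, hM, hsymD, d.ρ.sesq_right, map_add, hO.1]
  · intro a b c n m
    rw [hcompM a b c n m, hcompM b a c m n, hMM a b c n m, hMM b a c m n,
      ← map_sub d.T, ← map_sub d.T]
    congr 1
    simp only [add_comm n m]
    rw [hEE a b (e.symm c) n m, d.ρ.rep a b (e.symm c) n m]
    abel
  · intro a b k
    rw [hLmul a b k]
    congr 1
    rw [hcsub]
    exact congrArg (fun z => csubst L.D z k) (Mmul_eq d hbij b a).symm

end Back

/-- a Lie conformal algebra `R` admits a compatible left-symmetric
conformal algebra structure iff there is a bijective `𝒪`-operator `T : V → R`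
associated with some representation `ρ` of `R`. -/
theorem compatible_iff_bijective_ooperator {A : Type} [AddCommGroup A] [Module ℂ A]
    (L : LieConfAlg A) :
    (∃ S : LSConfAlg A, S.D = L.D ∧
        ∀ a b k, L.mul a b k = S.mul a b k - csubst S.D (S.mul b a) k)
    ↔ ∃ d : OOpData L, IsOOperator d.ρ d.T ∧ Function.Bijective d.T := by
  constructor
  · rintro ⟨S, hD, hcomp⟩
    exact forward_dir L S hD hcomp
  · rintro ⟨d, hO, hbij⟩
    exact backward_dir L d hO hbij
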